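/- Fix n, d, s ∈ ℕ with n ≥ 1, s even, 2 ≤ s ≤ d, and 8n + 4 ≤ s, and fix ε > 0 and σ > 0. Let M_tree(d,s) be the family of sets S ⊆ Fin d with |S| = s such that for every i ∈ S with i > 0, the parent ⌊(i−1)/2⌋ also lies in S. Let F be the set of vectors β : Fin d → ℝ such that there exist S ∈ M_tree(d,s) and disjoint sets A, B partitioning S with |A| = |B| = s/2, β_i = −ε for i ∈ A, β_i = √(2/s) + ε for i ∈ B, and β_i = 0 for i ∉ S. Then for every measurable estimator β̂ : ℝ^{n×d} × ℝ^n → ℝ^d, under the joint law in which β* is uniform on F, X ∈ ℝ^{n×d} has i.i.d. entries gaussianReal 0 (1/n), e ∈ ℝ^n has i.i.d. entries gaussianReal 0 σ², and β*, X, e are mutually independent, the probability that β̂(X, sign(X·β* + e)) ≠ β* is at least 1/2. -/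

import Mathlib

open MeasureTheory ProbabilityTheory Real
open scoped ENNReal NNReal

/-- The sign function, with `sign x = 1` for `x ≥ 0` and `-1` otherwise. -/
noncomputable def signFun (x : ℝ) : ℝ := if 0 ≤ x then 1 else -1

/-- The binary-tree-structured sparsity model: supports of size `s` that are closed
under the parent map `i ↦ ⌊(i-1)/2⌋` of the complete binary tree rooted at `0`. -/
def Mtree (d s : ℕ) : Set (Finset (Fin d)) :=
  {S | S.card = s ∧ ∀ i ∈ S, 0 < (i : ℕ) →
    (⟨((i : ℕ) - 1) / 2, by have := i.isLt; omega⟩ : Fin d) ∈ S}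

/-- The one-bit restricted ensemble over the binary-tree sparsity model. -/
noncomputable def F3tree (d s : ℕ) (ε : ℝ) : Set (Fin d → ℝ) :=
  {β | ∃ S ∈ Mtree d s, ∃ A B : Finset (Fin d), Disjoint A B ∧ A ∪ B = S ∧
    A.card = s / 2 ∧ B.card = s / 2 ∧
    (∀ i ∈ A, β i = -ε) ∧ (∀ i ∈ B, β i = Real.sqrt (2 / s) + ε) ∧
    ∀ i ∉ S, β i = 0}

lemma two_mul_le_two_pow' (k : ℕ) (hk : 1 ≤ k) : 2 * k ≤ 2 ^ k := by
  induction k with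
  | zero => omega
  | succ m ih =>
    rcases Nat.lt_or_ge m 1 with h | h
    · interval_cases m <;> norm_num
    · have h1 := ih h
      have h2 : 2 ≤ 2 ^ m := by
        calc 2 ≤ 2 * m := by omega
        _ ≤ 2 ^ m := h1
      have : 2 ^ (m + 1) = 2 ^ m + 2 ^ m := by ring
      omega

lemma choose_lb' (n s : ℕ) (heven : Even s) (hs2 : 2 ≤ s) (hns : 8 * n + 4 ≤ s) :
    2 ^ (n + 1) ≤ s.choose (s / 2) := by
  obtain ⟨k, hk⟩ := heven
  have hkpos : 0 < k := by omega
  have hsk : s = 2 * k := by omega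
  have h1 : s / 2 = k := by omega
  have hcb : 4 ^ k ≤ 2 * k * Nat.centralBinom k :=
    Nat.four_pow_le_two_mul_self_mul_centralBinom k hkpos
  have h2k : 2 * k ≤ 2 ^ k := two_mul_le_two_pow' k (by omega)
  have key : 2 * k * 2 ^ (n + 1) ≤ 2 * k * Nat.centralBinom k := by
    calc 2 * k * 2 ^ (n + 1) ≤ 2 ^ k * 2 ^ (n + 1) := Nat.mul_le_mul_right _ h2k
      _ = 2 ^ (k + (n + 1)) := (pow_add 2 k (n + 1)).symm
      _ ≤ 2 ^ (2 * k) := Nat.pow_le_pow_right (by norm_num) (by omega)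
      _ = 4 ^ k := by rw [pow_mul]; norm_num
      _ ≤ _ := hcb
  have h2 := Nat.le_of_mul_le_mul_left key (by omega)
  have h3 : s.choose (s / 2) = Nat.centralBinom k := by
    rw [hsk, Nat.centralBinom]; congr 1; omega
  omega

lemma F3tree_finite (d s : ℕ) (ε : ℝ) : (F3tree d s ε).Finite := by
  have hsub : F3tree d s ε ⊆
      Set.pi Set.univ (fun _ : Fin d => ({-ε, Real.sqrt (2 / s) + ε, 0} : Set ℝ)) := by
    rintro β ⟨S, _, A, B, _, hUnion, _, _, hβA, hβB, hβ0⟩ i _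
    by_cases hiA : i ∈ A
    · exact Or.inl (hβA i hiA)
    by_cases hiB : i ∈ B
    · exact Or.inr (Or.inl (hβB i hiB))
    · exact Or.inr (Or.inr (hβ0 i (by rw [← hUnion]; simp [hiA, hiB])))
  exact (Set.Finite.pi (fun _ => Set.toFinite _)).subset hsub

theorem onebit_cs_tree_sparsity_lower_bound
    (n d s : ℕ) (hn : 1 ≤ n) (heven : Even s) (hs2 : 2 ≤ s) (hsd : s ≤ d)
    (hns : 8 * n + 4 ≤ s)
    (ε σ : ℝ) (hε : 0 < ε) (hσ : 0 < σ)
    (est : (Fin n → Fin d → ℝ) × (Fin n → ℝ) → (Fin d → ℝ))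
    (hest : Measurable est) :
    (1 / 2 : ℝ≥0∞) ≤
      ((uniformOn (F3tree d s ε)).prod
          ((Measure.pi fun _ : Fin n => Measure.pi fun _ : Fin d =>
              gaussianReal 0 (1 / (n : ℝ≥0))).prod
            (Measure.pi fun _ : Fin n => gaussianReal 0 ⟨σ ^ 2, sq_nonneg σ⟩)))
        {ω : (Fin d → ℝ) × ((Fin n → Fin d → ℝ) × (Fin n → ℝ)) |
          est (ω.2.1, fun i => signFun ((∑ j, ω.2.1 i j * ω.1 j) + ω.2.2 i)) ≠ ω.1} := by
  classical
  set F : Set (Fin d → ℝ) := F3tree d s ε with hF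
  have hFfin : F.Finite := F3tree_finite d s ε
  have hFmeas : MeasurableSet F := hFfin.measurableSet
  -- the base support S0 = {0, ..., s-1}
  set S0 : Finset (Fin d) :=
    (Finset.univ : Finset (Fin s)).map ⟨Fin.castLE hsd, Fin.castLE_injective hsd⟩ with hS0
  have hS0mem : ∀ i : Fin d, i ∈ S0 ↔ (i : ℕ) < s := by
    intro i
    constructor
    · rintro hi
      rw [hS0, Finset.mem_map] at hi
      obtain ⟨j, _, hj⟩ := hi
      rw [← hj]
      exact j.isLt
    · intro hi
      rw [hS0, Finset.mem_map]
      exact ⟨⟨(i : ℕ), hi⟩, Finset.mem_univ _, by ext; simp [Fin.castLE]⟩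
  have hS0card : S0.card = s := by
    rw [hS0, Finset.card_map, Finset.card_univ, Fintype.card_fin]
  have hS0tree : S0 ∈ Mtree d s := by
    refine ⟨hS0card, ?_⟩
    intro i hi hpos
    rw [hS0mem] at hi ⊢
    simp only []
    omega
  -- the injection from half-subsets of S0 into F
  set βof : Finset (Fin d) → (Fin d → ℝ) := fun A i =>
    if i ∈ A then -ε else if (i : ℕ) < s then Real.sqrt (2 / s) + ε else 0 with hβof
  have hvalne : Real.sqrt (2 / s) + ε ≠ -ε := by
    have := Real.sqrt_nonneg (2 / (s : ℝ))
    intro h; linarith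
  have hmemF : ∀ A ∈ Finset.powersetCard (s / 2) S0, βof A ∈ F := by
    intro A hA
    rw [Finset.mem_powersetCard] at hA
    obtain ⟨hAS, hAc⟩ := hA
    obtain ⟨k, hk⟩ := heven
    refine ⟨S0, hS0tree, A, S0 \ A, Finset.disjoint_sdiff, Finset.union_sdiff_of_subset hAS,
      hAc, ?_, ?_, ?_, ?_⟩
    · rw [Finset.card_sdiff_of_subset hAS, hS0card, hAc]; omega
    · intro i hi; simp [hβof, hi]
    · intro i hi
      rw [Finset.mem_sdiff] at hi
      have := (hS0mem i).1 hi.1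
      simp [hβof, hi.2, this]
    · intro i hi
      have h1 : i ∉ A := fun h => hi (hAS h)
      have h2 : ¬ (i : ℕ) < s := fun h => hi ((hS0mem i).2 h)
      simp [hβof, h1, h2]
  have hinj : Set.InjOn βof (Finset.powersetCard (s / 2) S0) := by
    intro A hA A' hA' hAA
    ext i
    constructor
    · intro hi
      by_contra hi'
      have := congrFun hAA i
      simp only [hβof, if_pos hi, if_neg hi'] at this
      split at this
      · exact hvalne this.symm
      · exact absurd this.symm (by intro h; linarith)
    · intro hi
      by_contra hi'
      have := congrFun hAA i
      simp only [hβof, if_pos hi, if_neg hi'] at this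
      split at this
      · exact hvalne this
      · exact absurd this (by intro h; linarith)
  set G : Finset (Fin d → ℝ) := (Finset.powersetCard (s / 2) S0).image βof with hG
  have hGF : ↑G ⊆ F := by
    intro β hβ
    rw [hG, Finset.coe_image] at hβ
    obtain ⟨A, hA, rfl⟩ := hβ
    exact hmemF A hA
  have hGcard : G.card = s.choose (s / 2) := by
    rw [hG, Finset.card_image_of_injOn hinj, Finset.card_powersetCard, hS0card]
  have hchoose := choose_lb' n s heven hs2 hns
  have hGpos : 0 < G.card := by
    rw [hGcard]; exact lt_of_lt_of_le (Nat.pow_pos (by norm_num)) hchoose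
  have hFne : F.Nonempty := by
    obtain ⟨β, hβ⟩ := Finset.card_pos.mp hGpos
    exact ⟨β, hGF hβ⟩
  -- count lower bound
  have hcountF : ((2 : ℝ≥0∞) ^ (n + 1)) ≤ Measure.count F := by
    calc ((2 : ℝ≥0∞) ^ (n + 1)) = ((2 ^ (n + 1) : ℕ) : ℝ≥0∞) := by push_cast; ring
      _ ≤ ((G.card : ℕ) : ℝ≥0∞) := by
          exact_mod_cast (hGcard ▸ hchoose)
      _ = Measure.count (↑G : Set (Fin d → ℝ)) := (Measure.count_apply_finset G).symm
      _ ≤ Measure.count F := measure_mono hGF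
  -- probability measures
  haveI hμP : IsProbabilityMeasure (uniformOn F) :=
    uniformOn_isProbabilityMeasure hFfin hFne
  set νX : Measure (Fin n → Fin d → ℝ) :=
    Measure.pi fun _ : Fin n => Measure.pi fun _ : Fin d => gaussianReal 0 (1 / (n : ℝ≥0)) with hνX
  set νe : Measure (Fin n → ℝ) :=
    Measure.pi fun _ : Fin n => gaussianReal 0 ⟨σ ^ 2, sq_nonneg σ⟩ with hνe
  haveI : IsProbabilityMeasure νX := by rw [hνX]; infer_instance
  haveI : IsProbabilityMeasure νe := by
    rw [hνe]
    haveI : ∀ _ : Fin n, IsProbabilityMeasure (gaussianReal 0 ⟨σ ^ 2, sq_nonneg σ⟩) :=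
      fun _ => instIsProbabilityMeasureGaussianReal _ _
    infer_instance
  set ν := νX.prod νe with hν
  haveI : IsProbabilityMeasure ν := by rw [hν]; infer_instance
  set P := (uniformOn F).prod ν with hP
  haveI : IsProbabilityMeasure P := by rw [hP]; infer_instance
  -- measurability of the "correct" event
  have hsign : Measurable signFun := by
    unfold signFun
    exact Measurable.ite (measurableSet_le measurable_const measurable_id)
      measurable_const measurable_const
  set Ec : Set ((Fin d → ℝ) × ((Fin n → Fin d → ℝ) × (Fin n → ℝ))) :=
    {ω | est (ω.2.1, fun i => signFun ((∑ j, ω.2.1 i j * ω.1 j) + ω.2.2 i)) = ω.1} with hEc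
  have hg : Measurable (fun ω : (Fin d → ℝ) × ((Fin n → Fin d → ℝ) × (Fin n → ℝ)) =>
      est (ω.2.1, fun i => signFun ((∑ j, ω.2.1 i j * ω.1 j) + ω.2.2 i))) := by
    apply hest.comp
    apply Measurable.prodMk
    · exact measurable_fst.comp measurable_snd
    · apply measurable_pi_lambda
      intro i
      apply hsign.comp
      apply Measurable.add
      · apply Finset.measurable_sum
        intro j _
        exact ((measurable_fst.comp measurable_snd).eval.eval).mul measurable_fst.eval
      · exact (measurable_snd.comp measurable_snd).eval
  have hE : MeasurableSet Ec := measurableSet_eq_fun hg measurable_fst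
  -- slice bound
  have hslice : ∀ x : (Fin n → Fin d → ℝ) × (Fin n → ℝ),
      uniformOn F ((fun β => (β, x)) ⁻¹' Ec) ≤ 1 / 2 := by
    intro x
    set T : Set (Fin d → ℝ) := (fun β => (β, x)) ⁻¹' Ec with hT
    have hTmem : ∀ β, β ∈ T ↔
        est (x.1, fun i => signFun ((∑ j, x.1 i j * β j) + x.2 i)) = β := fun β => Iff.rfl
    have hrw : uniformOn F T = (Measure.count F)⁻¹ * Measure.count (F ∩ T) :=
      cond_apply hFmeas Measure.count T
    have hFTfin : (F ∩ T).Finite := hFfin.subset Set.inter_subset_left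
    set φ : (Fin d → ℝ) → (Fin n → Bool) :=
      fun β i => decide (0 ≤ (∑ j, x.1 i j * β j) + x.2 i) with hφ
    have hinj2 : Set.InjOn φ (F ∩ T) := by
      intro β hβ β' hβ' hφeq
      have h1 : (fun i => signFun ((∑ j, x.1 i j * β j) + x.2 i)) =
          (fun i => signFun ((∑ j, x.1 i j * β' j) + x.2 i)) := by
        funext i
        have h2 := congrFun hφeq i
        simp only [hφ, decide_eq_decide] at h2
        simp only [signFun, h2]
      have e1 := (hTmem β).1 hβ.2
      have e2 := (hTmem β').1 hβ'.2
      rw [← e1, ← e2, h1]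
    have hcard : hFTfin.toFinset.card ≤ 2 ^ n := by
      have hinj3 : Set.InjOn φ ↑hFTfin.toFinset := by
        rwa [Set.Finite.coe_toFinset]
      calc hFTfin.toFinset.card = (hFTfin.toFinset.image φ).card :=
            (Finset.card_image_of_injOn hinj3).symm
        _ ≤ Fintype.card (Fin n → Bool) := Finset.card_le_univ _
        _ = 2 ^ n := by simp
    have hcount2 : Measure.count (F ∩ T) ≤ (2 : ℝ≥0∞) ^ n := by
      rw [Measure.count_apply_finite _ hFTfin]
      calc ((hFTfin.toFinset.card : ℕ) : ℝ≥0∞) ≤ ((2 ^ n : ℕ) : ℝ≥0∞) := by exact_mod_cast hcard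
        _ = (2 : ℝ≥0∞) ^ n := by push_cast; ring
    rw [hrw]
    calc (Measure.count F)⁻¹ * Measure.count (F ∩ T)
        ≤ ((2 : ℝ≥0∞) ^ (n + 1))⁻¹ * (2 : ℝ≥0∞) ^ n := by
          gcongr
      _ = 1 / 2 := by
          rw [pow_succ, ENNReal.mul_inv (Or.inl (by positivity)) (Or.inl (by simp)),
            mul_comm ((2 : ℝ≥0∞) ^ n)⁻¹ 2⁻¹, mul_assoc,
            ENNReal.inv_mul_cancel (by positivity) (by simp), mul_one, one_div]
  -- combine
  have hPE : P Ec ≤ 1 / 2 := by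
    rw [hP, Measure.prod_apply_symm hE]
    calc ∫⁻ x, uniformOn F ((fun β => (β, x)) ⁻¹' Ec) ∂ν ≤ ∫⁻ _, 1 / 2 ∂ν :=
          lintegral_mono hslice
      _ = 1 / 2 := by simp
  have hcompl : {ω : (Fin d → ℝ) × ((Fin n → Fin d → ℝ) × (Fin n → ℝ)) |
      est (ω.2.1, fun i => signFun ((∑ j, ω.2.1 i j * ω.1 j) + ω.2.2 i)) ≠ ω.1} = Ecᶜ := rfl
  rw [hcompl, measure_compl hE (measure_ne_top _ _), measure_univ]
  calc (1 : ℝ≥0∞) / 2 = 1 - 1 / 2 := by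
        exact (ENNReal.sub_half ENNReal.one_ne_top).symm
      _ ≤ 1 - P Ec := tsub_le_tsub_left hPE 1
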